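/- Let $X, \tilde{X}$ satisfy the knockoff conditions with $S = \mathrm{diag}(s)$, $s_i > 0$, $\Sigma - S/2$ invertible, and let $y = X\beta + \epsilon$. Define $\epsilon^{(1)} = (\Sigma - S/2)^{-1}(\frac{X+\tilde{X}}{2})^T\epsilon$ and $\epsilon^{(2)} = (S/2)^{-1}(\frac{X-\tilde{X}}{2})^T\epsilon$. Then the half Lasso solution $(\hat\beta, \tilde\beta)$ minimizing $\frac{1}{2}\|y - X\hat\beta - \tilde{X}\tilde\beta\|_2^2 + \lambda\|\hat\beta - \tilde\beta\|_1$ satisfies $\hat\beta = \frac{1}{2}\big(\beta + \epsilon^{(1)} + Sh(\beta + \epsilon^{(2)}, 2\lambda S_{inv})\big)$ and $\tilde\beta = \frac{1}{2}\big(\beta + \epsilon^{(1)} - Sh(\beta + \epsilon^{(2)}, 2\lambda S_{inv})\big)$, where $Sh(x, t)_i = \mathrm{sign}(x_i)(|x_i| - t_i)_+$ and $(S_{inv})_i = 1/s_i$. -/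

import Mathlib

open Matrix

private lemma key_scalar (c lam z v : ℝ) (hc : 0 < c) (hl : 0 < lam) :
    c * (z - Real.sign z * max (|z| - lam / c) 0) *
        (v - Real.sign z * max (|z| - lam / c) 0)
      ≤ lam * (|v| - |Real.sign z * max (|z| - lam / c) 0|) := by
  rcases lt_trichotomy z 0 with hz | hz | hz
  · rw [Real.sign_of_neg hz]
    rcases le_or_gt (|z| - lam / c) 0 with h | h
    · rw [max_eq_right h]
      have hz' : |z| = -z := abs_of_neg hz
      have h1 : c * z * v ≤ lam * |v| := by
        have hcz : c * (-z) ≤ lam := by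
          have := (sub_nonpos.mp h)
          calc c * (-z) ≤ c * (lam / c) := by nlinarith [hz'.symm.le]
          _ = lam := by field_simp
        nlinarith [mul_le_mul_of_nonneg_left (neg_abs_le v)
            (mul_nonneg hc.le (neg_nonneg.mpr hz.le)),
          mul_nonneg (sub_nonneg.mpr hcz) (abs_nonneg v)]
      simpa using h1
    · rw [max_eq_left h.le]
      have hz' : |z| = -z := abs_of_neg hz
      have hvs : (-1 : ℝ) * (|z| - lam / c) = z + lam / c := by rw [hz']; ring
      rw [hvs]
      have habs : |(-1 : ℝ) * (|z| - lam / c)| = |z| - lam / c := by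
        rw [abs_mul, abs_neg, abs_one, one_mul, abs_of_pos h]
      rw [hvs] at habs
      rw [habs, hz']
      have h2 : c * (z - (z + lam / c)) = -lam := by field_simp; try ring
      rw [h2]
      nlinarith [neg_abs_le v]
  · simp [hz, Real.sign_zero, abs_nonneg v, mul_nonneg hl.le (abs_nonneg v)]
  · rw [Real.sign_of_pos hz]
    rcases le_or_gt (|z| - lam / c) 0 with h | h
    · rw [max_eq_right h]
      have hz' : |z| = z := abs_of_pos hz
      have hcz : c * z ≤ lam := by
        have := sub_nonpos.mp h
        calc c * z ≤ c * (lam / c) := by nlinarith [hz'.symm.le]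
        _ = lam := by field_simp
      simp only [one_mul, mul_zero, sub_zero, abs_zero]
      nlinarith [le_abs_self v, abs_nonneg v, mul_pos hc hz]
    · rw [max_eq_left h.le]
      have hz' : |z| = z := abs_of_pos hz
      rw [one_mul, abs_of_pos h, hz']
      have h2 : c * (z - (z - lam / c)) = lam := by field_simp; try ring
      rw [h2]
      nlinarith [le_abs_self v]

private lemma sum_expand (n : ℕ) (r a c : Fin n → ℝ) :
    ∑ k, (r k - a k - c k) ^ 2 =
      ∑ k, (r k) ^ 2 - 2 * (r ⬝ᵥ a) - 2 * (r ⬝ᵥ c)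
        + a ⬝ᵥ a + c ⬝ᵥ c + 2 * (a ⬝ᵥ c) := by
  simp only [dotProduct, Finset.mul_sum, ← Finset.sum_sub_distrib, ← Finset.sum_add_distrib]
  exact Finset.sum_congr rfl fun k _ => by ring

set_option maxHeartbeats 2000000 in
theorem half_lasso_solution_formula (n p : ℕ)
    (X Xt : Matrix (Fin n) (Fin p) ℝ) (s : Fin p → ℝ)
    (h1 : Xtᵀ * Xt = Xᵀ * X)
    (h2 : Xtᵀ * X = Xᵀ * X - Matrix.diagonal s)
    (hspos : ∀ i, 0 < s i)
    (hinv : IsUnit (Xᵀ * X - (1 / 2 : ℝ) • Matrix.diagonal s))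
    (lam : ℝ) (hlam : 0 < lam)
    (β : Fin p → ℝ) (ε : Fin n → ℝ) (y : Fin n → ℝ)
    (hy : y = X *ᵥ β + ε)
    (ε1 ε2 : Fin p → ℝ)
    (hε1 : ε1 = (Xᵀ * X - (1 / 2 : ℝ) • Matrix.diagonal s)⁻¹ *ᵥ
        (((1 / 2 : ℝ) • (X + Xt))ᵀ *ᵥ ε))
    (hε2 : ε2 = ((1 / 2 : ℝ) • Matrix.diagonal s)⁻¹ *ᵥ
        (((1 / 2 : ℝ) • (X - Xt))ᵀ *ᵥ ε))
    (bh bt : Fin p → ℝ)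
    (hmin : ∀ b b' : Fin p → ℝ,
      (1 / 2) * (∑ k, (y k - (X *ᵥ bh) k - (Xt *ᵥ bt) k) ^ 2)
          + lam * ∑ i, |bh i - bt i| ≤
      (1 / 2) * (∑ k, (y k - (X *ᵥ b) k - (Xt *ᵥ b') k) ^ 2)
          + lam * ∑ i, |b i - b' i|) :
    (∀ i, bh i = (1 / 2) * (β i + ε1 i +
        Real.sign (β i + ε2 i) * max (|β i + ε2 i| - 2 * lam * (1 / s i)) 0)) ∧
    (∀ i, bt i = (1 / 2) * (β i + ε1 i -
        Real.sign (β i + ε2 i) * max (|β i + ε2 i| - 2 * lam * (1 / s i)) 0)) := by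
  -- basic matrix identities
  have h2' : Xᵀ * Xt = Xᵀ * X - Matrix.diagonal s := by
    have := congrArg Matrix.transpose h2
    simpa [Matrix.transpose_mul, Matrix.transpose_sub, Matrix.transpose_transpose,
      Matrix.diagonal_transpose] using this
  set D : Matrix (Fin p) (Fin p) ℝ := Matrix.diagonal s with hD
  set A : Matrix (Fin n) (Fin p) ℝ := (1 / 2 : ℝ) • (X + Xt) with hA
  set B : Matrix (Fin n) (Fin p) ℝ := (1 / 2 : ℝ) • (X - Xt) with hB
  set M : Matrix (Fin p) (Fin p) ℝ := Xᵀ * X - (1 / 2 : ℝ) • D with hM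
  have hAB : Aᵀ * B = 0 := by
    simp only [hA, hB, Matrix.transpose_smul, Matrix.transpose_add, Matrix.smul_mul,
      Matrix.mul_smul, Matrix.add_mul, Matrix.mul_sub, h1, h2, h2']
    module
  have hAA : Aᵀ * A = M := by
    simp only [hA, hM, Matrix.transpose_smul, Matrix.transpose_add, Matrix.smul_mul,
      Matrix.mul_smul, Matrix.add_mul, Matrix.mul_add, h1, h2, h2']
    module
  have hBB : Bᵀ * B = (1 / 2 : ℝ) • D := by
    simp only [hB, Matrix.transpose_smul, Matrix.transpose_sub, Matrix.smul_mul,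
      Matrix.mul_smul, Matrix.sub_mul, Matrix.mul_sub, h1, h2, h2']
    module
  have hBA : Bᵀ * A = 0 := by
    have := congrArg Matrix.transpose hAB
    simpa [Matrix.transpose_mul, Matrix.transpose_transpose] using this
  have hAX : Aᵀ * X = M := by
    simp only [hA, hM, Matrix.transpose_smul, Matrix.transpose_add, Matrix.smul_mul,
      Matrix.add_mul, h2]
    module
  have hBX : Bᵀ * X = (1 / 2 : ℝ) • D := by
    simp only [hB, Matrix.transpose_smul, Matrix.transpose_sub, Matrix.smul_mul,
      Matrix.sub_mul, h2]
    module
  -- inverses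
  have hMdet : IsUnit M.det := (Matrix.isUnit_iff_isUnit_det M).mp hinv
  have hMMinv : ∀ x : Fin p → ℝ, M *ᵥ (M⁻¹ *ᵥ x) = x := by
    intro x
    rw [Matrix.mulVec_mulVec, Matrix.mul_nonsing_inv M hMdet, Matrix.one_mulVec]
  have hMinvM : ∀ x : Fin p → ℝ, M⁻¹ *ᵥ (M *ᵥ x) = x := by
    intro x
    rw [Matrix.mulVec_mulVec, Matrix.nonsing_inv_mul M hMdet, Matrix.one_mulVec]
  have hD2det : IsUnit ((1 / 2 : ℝ) • D).det := by
    rw [hD, Matrix.det_smul, Matrix.det_diagonal]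
    refine (IsUnit.mul_iff.mpr ⟨?_, ?_⟩)
    · exact (isUnit_iff_ne_zero).mpr (pow_ne_zero _ (by norm_num))
    · exact (isUnit_iff_ne_zero).mpr (Finset.prod_ne_zero_iff.mpr fun i _ => (hspos i).ne')
  have hD2inv : ∀ x : Fin p → ℝ, ((1 / 2 : ℝ) • D) *ᵥ (((1 / 2 : ℝ) • D)⁻¹ *ᵥ x) = x := by
    intro x
    rw [Matrix.mulVec_mulVec, Matrix.mul_nonsing_inv _ hD2det, Matrix.one_mulVec]
  have hD2coord : ∀ (x : Fin p → ℝ) (i : Fin p),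
      (((1 / 2 : ℝ) • D) *ᵥ x) i = s i / 2 * x i := by
    intro x i
    rw [hD, Matrix.smul_mulVec]
    simp [Matrix.mulVec_diagonal]
    ring
  -- the candidate solution
  set us : Fin p → ℝ := β + ε1 with hus
  set vs : Fin p → ℝ := fun i =>
    Real.sign (β i + ε2 i) * max (|β i + ε2 i| - 2 * lam * (1 / s i)) 0 with hvs
  -- normal equation for us
  have hMu : M *ᵥ us = Aᵀ *ᵥ y := by
    have hε1' : M *ᵥ ε1 = Aᵀ *ᵥ ε := by
      rw [hε1]; exact hMMinv _
    rw [hus, Matrix.mulVec_add, hε1', hy, Matrix.mulVec_add, Matrix.mulVec_mulVec, hAX]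
  -- coordinates of Bᵀ y
  have hBy : ∀ i, (Bᵀ *ᵥ y) i = s i / 2 * (β i + ε2 i) := by
    intro i
    have hε2' : (((1 / 2 : ℝ) • D) *ᵥ ε2) = Bᵀ *ᵥ ε := by
      rw [hε2]; exact hD2inv _
    have heq : Bᵀ *ᵥ y = ((1 / 2 : ℝ) • D) *ᵥ β + ((1 / 2 : ℝ) • D) *ᵥ ε2 := by
      rw [hy, Matrix.mulVec_add, Matrix.mulVec_mulVec, hBX, hε2']
    rw [heq]
    simp only [Pi.add_apply, hD2coord]
    ring
  -- decomposition of the fit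
  have hdecomp : ∀ b b' : Fin p → ℝ, ∀ k,
      (X *ᵥ b) k + (Xt *ᵥ b') k =
        (A *ᵥ (b + b')) k + (B *ᵥ (fun i => b i - b' i)) k := by
    intro b b' k
    simp only [hA, hB, Matrix.smul_mulVec, Matrix.add_mulVec, Matrix.sub_mulVec,
      Matrix.mulVec_add, Pi.smul_apply, Pi.add_apply, Pi.sub_apply, smul_eq_mul]
    have hXs : X *ᵥ (fun i => b i - b' i) = X *ᵥ b - X *ᵥ b' := by
      have := Matrix.mulVec_sub X b b'; simpa [Pi.sub_def] using this
    have hXts : Xt *ᵥ (fun i => b i - b' i) = Xt *ᵥ b - Xt *ᵥ b' := by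
      have := Matrix.mulVec_sub Xt b b'; simpa [Pi.sub_def] using this
    rw [hXs, hXts]
    simp only [Pi.add_apply, Pi.sub_apply]
    ring
  -- the residual at the candidate
  set r : Fin n → ℝ := y - A *ᵥ us - B *ᵥ vs with hr
  have hAr : Aᵀ *ᵥ r = 0 := by
    rw [hr, Matrix.mulVec_sub, Matrix.mulVec_sub, Matrix.mulVec_mulVec, Matrix.mulVec_mulVec,
      hAA, hAB, ← hMu]
    simp [Matrix.zero_mulVec]
  have hBr : ∀ i, (Bᵀ *ᵥ r) i = s i / 2 * ((β i + ε2 i) - vs i) := by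
    intro i
    rw [hr, Matrix.mulVec_sub, Matrix.mulVec_sub, Matrix.mulVec_mulVec, Matrix.mulVec_mulVec,
      hBA, hBB]
    simp only [Pi.sub_apply, Matrix.zero_mulVec, Pi.zero_apply, hBy, hD2coord]
    ring
  -- the candidate pair
  set bhs : Fin p → ℝ := fun i => (us i + vs i) / 2 with hbhs
  set bts : Fin p → ℝ := fun i => (us i - vs i) / 2 with hbts
  have hcand : ∀ k, y k - (X *ᵥ bhs) k - (Xt *ᵥ bts) k = r k := by
    intro k
    have hsum : bhs + bts = us := by funext i; simp [hbhs, hbts]; ring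
    have hdiff : (fun i => bhs i - bts i) = vs := by funext i; simp [hbhs, hbts]; ring
    have := hdecomp bhs bts k
    rw [hsum, hdiff] at this
    have h3 : (X *ᵥ bhs) k + (Xt *ᵥ bts) k = (A *ᵥ us) k + (B *ᵥ vs) k := this
    rw [hr]
    simp only [Pi.sub_apply]
    linarith
  have hcabs : ∀ i, |bhs i - bts i| = |vs i| := by
    intro i; simp only [hbhs, hbts]; congr 1; ring
  -- the key gap inequality
  have hgap : ∀ b b' : Fin p → ℝ,
      ((1 / 2) * (∑ k, (y k - (X *ᵥ bhs) k - (Xt *ᵥ bts) k) ^ 2)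
          + lam * ∑ i, |bhs i - bts i|)
        + (1 / 2) * ∑ k, ((A *ᵥ (b + b' - us)) k) ^ 2
        + ∑ i, s i / 4 * (b i - b' i - vs i) ^ 2
      ≤ (1 / 2) * (∑ k, (y k - (X *ᵥ b) k - (Xt *ᵥ b') k) ^ 2)
          + lam * ∑ i, |b i - b' i| := by
    intro b b'
    set du : Fin p → ℝ := b + b' - us with hdu
    set dv : Fin p → ℝ := fun i => b i - b' i - vs i with hdv
    -- residual identity
    have hres : ∀ k, y k - (X *ᵥ b) k - (Xt *ᵥ b') k
        = r k - (A *ᵥ du) k - (B *ᵥ dv) k := by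
      intro k
      have h4 := hdecomp b b' k
      have h5 : A *ᵥ (b + b') = A *ᵥ us + A *ᵥ du := by
        have he : (b + b' : Fin p → ℝ) = us + du := by
          funext j
          simp only [hdu, Pi.sub_apply, Pi.add_apply]; ring
        rw [he, Matrix.mulVec_add]
      have h6 : B *ᵥ (fun i => b i - b' i) = B *ᵥ vs + B *ᵥ dv := by
        have he : (fun i => b i - b' i) = vs + dv := by
          funext j
          show b j - b' j = vs j + dv j
          simp only [hdv]; ring
        rw [he, Matrix.mulVec_add]
      rw [h5, h6] at h4
      rw [hr]
      simp only [Pi.sub_apply, Pi.add_apply] at h4 ⊢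
      linarith
    have hsum2 : ∑ k, (y k - (X *ᵥ b) k - (Xt *ᵥ b') k) ^ 2
        = ∑ k, (r k - (A *ᵥ du) k - (B *ᵥ dv) k) ^ 2 :=
      Finset.sum_congr rfl fun k _ => by rw [hres k]
    have hexp := sum_expand n r (A *ᵥ du) (B *ᵥ dv)
    -- cross terms
    have c1 : r ⬝ᵥ (A *ᵥ du) = 0 := by
      rw [Matrix.dotProduct_mulVec, ← Matrix.mulVec_transpose, hAr, zero_dotProduct]
    have c2 : r ⬝ᵥ (B *ᵥ dv) = ∑ i, s i / 2 * ((β i + ε2 i) - vs i) * dv i := by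
      rw [Matrix.dotProduct_mulVec, ← Matrix.mulVec_transpose]
      exact Finset.sum_congr rfl fun i _ => by rw [hBr i]
    have c3 : (A *ᵥ du) ⬝ᵥ (B *ᵥ dv) = 0 := by
      rw [Matrix.dotProduct_mulVec, ← Matrix.mulVec_transpose, Matrix.mulVec_mulVec, hBA,
        Matrix.zero_mulVec, zero_dotProduct]
    have c4 : (B *ᵥ dv) ⬝ᵥ (B *ᵥ dv) = ∑ i, s i / 2 * dv i ^ 2 := by
      rw [Matrix.dotProduct_mulVec, ← Matrix.mulVec_transpose, Matrix.mulVec_mulVec, hBB]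
      exact Finset.sum_congr rfl fun i _ => by rw [hD2coord]; ring
    have c5 : (A *ᵥ du) ⬝ᵥ (A *ᵥ du) = ∑ k, ((A *ᵥ du) k) ^ 2 := by
      simp [dotProduct, sq]
    -- per coordinate soft-thresholding inequality
    have hT : ∑ i, s i / 2 * ((β i + ε2 i) - vs i) * dv i
        ≤ ∑ i, lam * (|b i - b' i| - |vs i|) := by
      refine Finset.sum_le_sum fun i _ => ?_
      have hsne : s i ≠ 0 := (hspos i).ne'
      have hthr : lam / (s i / 2) = 2 * lam * (1 / s i) := by
        field_simp
      have hci : (0:ℝ) < s i / 2 := by linarith [hspos i]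
      have := key_scalar (s i / 2) lam (β i + ε2 i) (b i - b' i) hci hlam
      rw [hthr] at this
      simpa [hvs, hdv] using this
    -- sum algebra
    have hSB : ∑ i, s i / 2 * dv i ^ 2 = 2 * ∑ i, s i / 4 * (b i - b' i - vs i) ^ 2 := by
      rw [Finset.mul_sum]
      exact Finset.sum_congr rfl fun i _ => by simp [hdv]; ring
    have hlamsum : ∑ i, lam * (|b i - b' i| - |vs i|)
        = lam * ∑ i, |b i - b' i| - lam * ∑ i, |vs i| := by
      rw [Finset.mul_sum, Finset.mul_sum, ← Finset.sum_sub_distrib]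
      exact Finset.sum_congr rfl fun i _ => by ring
    have hcandsum : ∑ k, (y k - (X *ᵥ bhs) k - (Xt *ᵥ bts) k) ^ 2 = ∑ k, (r k) ^ 2 :=
      Finset.sum_congr rfl fun k _ => by rw [hcand k]
    have hcababs : ∑ i, |bhs i - bts i| = ∑ i, |vs i| :=
      Finset.sum_congr rfl fun i _ => hcabs i
    rw [hsum2, hexp, c1, c2, c3, c4, c5, hcandsum, hcababs]
    rw [hlamsum] at hT
    rw [hSB]
    linarith
  -- apply minimality
  have hmin1 := hmin bhs bts
  have hgap1 := hgap bh bt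
  have hG1 : (0:ℝ) ≤ (1 / 2) * ∑ k, ((A *ᵥ (bh + bt - us)) k) ^ 2 := by
    positivity
  have hG2nonneg : ∀ i ∈ Finset.univ, (0:ℝ) ≤ s i / 4 * (bh i - bt i - vs i) ^ 2 := by
    intro i _
    have := hspos i
    positivity
  have hG2 : (0:ℝ) ≤ ∑ i, s i / 4 * (bh i - bt i - vs i) ^ 2 :=
    Finset.sum_nonneg hG2nonneg
  have hzero : (1 / 2) * ∑ k, ((A *ᵥ (bh + bt - us)) k) ^ 2
      + ∑ i, s i / 4 * (bh i - bt i - vs i) ^ 2 ≤ 0 := by linarith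
  have hG1z : (1 / 2) * ∑ k, ((A *ᵥ (bh + bt - us)) k) ^ 2 = 0 := by linarith
  have hG2z : ∑ i, s i / 4 * (bh i - bt i - vs i) ^ 2 = 0 := by linarith
  -- extract v-part
  have hveq : ∀ i, bh i - bt i = vs i := by
    intro i
    have := (Finset.sum_eq_zero_iff_of_nonneg hG2nonneg).mp hG2z i (Finset.mem_univ i)
    have hsi := hspos i
    have h7 : (bh i - bt i - vs i) ^ 2 = 0 := by
      by_contra h8
      have : (0:ℝ) < (bh i - bt i - vs i) ^ 2 := lt_of_le_of_ne (sq_nonneg _) (Ne.symm h8)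
      nlinarith
    have := pow_eq_zero_iff (n := 2) (by norm_num) |>.mp h7
    linarith [this]
  -- extract u-part
  have hueq : ∀ i, bh i + bt i = us i := by
    have hsumz : ∑ k, ((A *ᵥ (bh + bt - us)) k) ^ 2 = 0 := by linarith
    have hAz : ∀ k, (A *ᵥ (bh + bt - us)) k = 0 := by
      intro k
      have := (Finset.sum_eq_zero_iff_of_nonneg
        (fun k _ => sq_nonneg ((A *ᵥ (bh + bt - us)) k))).mp hsumz k (Finset.mem_univ k)
      exact pow_eq_zero_iff (n := 2) (by norm_num) |>.mp this
    have hAz' : A *ᵥ (bh + bt - us) = 0 := funext hAz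
    have hMz : M *ᵥ (bh + bt - us) = 0 := by
      rw [← hAA, ← Matrix.mulVec_mulVec, hAz', Matrix.mulVec_zero]
    have := hMinvM (bh + bt - us)
    rw [hMz, Matrix.mulVec_zero] at this
    intro i
    have := congrFun this.symm i
    simp only [Pi.sub_apply, Pi.add_apply, Pi.zero_apply] at this
    linarith
  constructor
  · intro i
    have h9 := hveq i
    have h10 := hueq i
    have husx : us i = β i + ε1 i := by simp [hus]
    have hvsx : vs i = Real.sign (β i + ε2 i) * max (|β i + ε2 i| - 2 * lam * (1 / s i)) 0 := by
      simp [hvs]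
    rw [husx] at h10
    rw [hvsx] at h9
    linarith
  · intro i
    have h9 := hveq i
    have h10 := hueq i
    have husx : us i = β i + ε1 i := by simp [hus]
    have hvsx : vs i = Real.sign (β i + ε2 i) * max (|β i + ε2 i| - 2 * lam * (1 / s i)) 0 := by
      simp [hvs]
    rw [husx] at h10
    rw [hvsx] at h9
    linarith
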